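/- Let p : Y → [0,1] be a probability distribution over Y ⊆ {+1,-1}^q, and for indices j,k,t ∈ {1,...,q} define Δ_{j,k} = Σ_{y ∈ Y : y_j = -1, y_k = +1} p(y). If Δ_{j,k} ≤ Δ_{k,j} and Δ_{k,t} ≤ Δ_{t,k}, then Δ_{j,t} ≤ Δ_{t,j}. -/
import Mathlib

open Finset

theorem stmt_5 (q : ℕ) (p : (Fin q → Bool) → ℝ)
    (hp0 : ∀ y, 0 ≤ p y) (hp1 : ∑ y : Fin q → Bool, p y = 1)
    (j k t : Fin q) :
    let Δ : Fin q → Fin q → ℝ := fun j k =>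
      ∑ y ∈ Finset.univ.filter (fun y : Fin q → Bool => y j = false ∧ y k = true), p y
    Δ j k ≤ Δ k j → Δ k t ≤ Δ t k → Δ j t ≤ Δ t j := by
  intro Δ h1 h2
  have key : ∀ a b : Fin q, Δ b a - Δ a b =
      (∑ y ∈ Finset.univ.filter (fun y : Fin q → Bool => y a = true), p y) -
      (∑ y ∈ Finset.univ.filter (fun y : Fin q → Bool => y b = true), p y) := by
    intro a b
    simp only [Δ, Finset.sum_filter, ← Finset.sum_sub_distrib]
    apply Finset.sum_congr rfl
    intro y _
    cases hya : y a <;> cases hyb : y b <;> simp [hya, hyb]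
  linarith [key j k, key k t, key j t]
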